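/- Let L be a simple ℤ-graded Lie algebra over a field k with L ≠ L_0. If f is a Lie algebra automorphism of L such that f(x) = x for every x ∈ L_i and every i ≠ 0, then f is the identity map of L. -/

import Mathlib

/-- If an automorphism of a simple ℤ-graded Lie algebra L (with L ≠ L_0)
fixes every homogeneous element of nonzero degree, then it is the identity. -/
theorem statement13
    (k : Type*) [Field k]
    (L : Type*) [LieRing L] [LieAlgebra k L] [LieAlgebra.IsSimple k L]
    (Lc : ℤ → Submodule k L)
    (hdirect : DirectSum.IsInternal Lc)
    (hbracket : ∀ i j : ℤ, ∀ x ∈ Lc i, ∀ y ∈ Lc j, ⁅x, y⁆ ∈ Lc (i + j))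
    (hnontriv : Lc 0 ≠ ⊤)
    (f : L ≃ₗ⁅k⁆ L)
    (hfix : ∀ i : ℤ, i ≠ 0 → ∀ x ∈ Lc i, f x = x) :
    ∀ a : L, f a = a := by
  classical
  have htop : (⨆ i, Lc i) = ⊤ := hdirect.submodule_iSup_eq_top
  -- The centralizer of all homogeneous components of nonzero degree.
  set P : L → Prop := fun z => ∀ i : ℤ, i ≠ 0 → ∀ y ∈ Lc i, ⁅z, y⁆ = 0 with hP
  have Pzero : P 0 := by intro i hi y hy; simp
  have Padd : ∀ a b, P a → P b → P (a + b) := by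
    intro a b ha hb i hi y hy
    rw [add_lie, ha i hi y hy, hb i hi y hy, add_zero]
  have Psmul : ∀ (c : k) a, P a → P (c • a) := by
    intro c a ha i hi y hy
    rw [smul_lie, ha i hi y hy, smul_zero]
  have Plie : ∀ (x z : L), P z → P ⁅x, z⁆ := by
    intro x z hz i hi y hy
    have hx : x ∈ ⨆ j, Lc j := htop ▸ Submodule.mem_top
    refine Submodule.iSup_induction Lc (motive := fun x => ⁅⁅x, z⁆, y⁆ = 0) hx ?_ (by simp) ?_
    · intro j u hu
      rw [lie_lie, hz i hi y hy, lie_zero, zero_sub, neg_eq_zero]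
      by_cases hji : j + i = 0
      · have hj : j ≠ 0 := fun h => hi (by omega)
        have hzu : ⁅z, u⁆ = 0 := hz j hj u hu
        rw [leibniz_lie, hzu, zero_lie, hz i hi y hy, lie_zero, add_zero]
      · exact hz (j + i) hji _ (hbracket j i u hu y hy)
    · intro a b ha hb
      rw [add_lie, add_lie, ha, hb, add_zero]
  let C : LieIdeal k L :=
    { carrier := {z | P z}
      add_mem' := fun ha hb => Padd _ _ ha hb
      zero_mem' := Pzero
      smul_mem' := fun c a ha => Psmul c a ha
      lie_mem := fun {x z} hz => Plie x z hz }
  have hmemC : ∀ z, z ∈ C ↔ P z := fun z => Iff.rfl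
  -- C is not the whole algebra, hence is ⊥ by simplicity.
  have hCbot : C = ⊥ := by
    rcases LieAlgebra.IsSimple.eq_bot_or_eq_top C with h | h
    · exact h
    · exfalso
      apply hnontriv
      rw [← htop]
      apply le_antisymm
      · exact le_iSup Lc 0
      · apply iSup_le
        intro i
        by_cases hi : i = 0
        · subst hi; exact le_refl _
        · intro y hy
          have hy0 : y = 0 := by
            have : y ∈ LieAlgebra.center k L := by
              intro w
              have hw : w ∈ C := h ▸ LieSubmodule.mem_top w
              exact (hmemC w).mp hw i hi y hy
            rwa [LieAlgebra.center_eq_bot k L,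
              LieSubmodule.mem_bot] at this
          rw [hy0]; exact Submodule.zero_mem _
  -- Elements of Lc 0 are fixed by f.
  have hfix0 : ∀ x ∈ Lc 0, f x = x := by
    intro x hx
    have hdiff : P (f x - x) := by
      intro i hi y hy
      have hxy : ⁅x, y⁆ ∈ Lc i := by
        have := hbracket 0 i x hx y hy
        rwa [zero_add] at this
      have h1 : f ⁅x, y⁆ = ⁅x, y⁆ := hfix i hi _ hxy
      have h2 : f ⁅x, y⁆ = ⁅f x, y⁆ := by
        rw [LieEquiv.map_lie, hfix i hi y hy]
      rw [sub_lie, h2.symm.trans h1, sub_self]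
    have : f x - x ∈ C := (hmemC _).mpr hdiff
    rw [hCbot, LieSubmodule.mem_bot] at this
    exact sub_eq_zero.mp this
  -- The fixed points form a submodule containing every Lc i, hence all of L.
  intro a
  let S : Submodule k L :=
    { carrier := {z | f z = z}
      add_mem' := by
        intro u v hu hv
        show f (u + v) = u + v
        rw [show f (u + v) = f u + f v from f.toLinearEquiv.map_add u v, hu, hv]
      zero_mem' := show f 0 = 0 from f.toLinearEquiv.map_zero
      smul_mem' := by
        intro c u hu
        show f (c • u) = c • u
        rw [show f (c • u) = c • f u from f.toLinearEquiv.map_smul c u, hu] }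
  have hS : (⨆ i, Lc i) ≤ S := by
    apply iSup_le
    intro i
    by_cases hi : i = 0
    · subst hi; intro x hx; exact hfix0 x hx
    · intro x hx; exact hfix i hi x hx
  exact hS (htop ▸ Submodule.mem_top)
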